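/- The derivative of θ at z = 0 is given by θ'(0, τ) = 2π q^{1/8} ∏_{n=1}^∞ (1−q^n)^3, where the derivative is taken in the z variable. -/

import Mathlib

open Complex Real
open Filter

lemma triple_prod_est {a b c : ℂ} {t : ℝ} (ha : ‖a‖ ≤ t) (hb : ‖b‖ ≤ t) (hc : ‖c‖ ≤ t)
    (ht : t ≤ 1) : ‖(1 - a) * (1 - b) * (1 - c) - 1‖ ≤ 7 * t := by
  have h0 : 0 ≤ t := le_trans (norm_nonneg a) ha
  have key : (1 - a) * (1 - b) * (1 - c) - 1
      = -(a + b + c) + (a * b + a * c + b * c) - a * b * c := by ring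
  rw [key]
  have hab : ‖a * b‖ ≤ t := by
    rw [norm_mul]
    calc ‖a‖ * ‖b‖ ≤ t * 1 := mul_le_mul ha (hb.trans ht) (norm_nonneg b) h0
    _ = t := mul_one t
  have hac : ‖a * c‖ ≤ t := by
    rw [norm_mul]
    calc ‖a‖ * ‖c‖ ≤ t * 1 := mul_le_mul ha (hc.trans ht) (norm_nonneg c) h0
    _ = t := mul_one t
  have hbc : ‖b * c‖ ≤ t := by
    rw [norm_mul]
    calc ‖b‖ * ‖c‖ ≤ t * 1 := mul_le_mul hb (hc.trans ht) (norm_nonneg c) h0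
    _ = t := mul_one t
  have habc : ‖a * b * c‖ ≤ t := by
    rw [norm_mul]
    calc ‖a * b‖ * ‖c‖ ≤ t * 1 := mul_le_mul hab (hc.trans ht) (norm_nonneg c) h0
    _ = t := mul_one t
  calc ‖-(a + b + c) + (a * b + a * c + b * c) - a * b * c‖
      ≤ ‖-(a + b + c) + (a * b + a * c + b * c)‖ + ‖a * b * c‖ := norm_sub_le _ _
    _ ≤ ‖-(a + b + c)‖ + ‖a * b + a * c + b * c‖ + ‖a * b * c‖ := by
        gcongr; exact norm_add_le _ _
    _ ≤ (t + t + t) + (t + t + t) + t := by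
        gcongr
        · rw [norm_neg]
          calc ‖a + b + c‖ ≤ ‖a + b‖ + ‖c‖ := norm_add_le _ _
            _ ≤ (‖a‖ + ‖b‖) + ‖c‖ := by gcongr; exact norm_add_le _ _
            _ ≤ t + t + t := by gcongr
        · calc ‖a * b + a * c + b * c‖ ≤ ‖a * b + a * c‖ + ‖b * c‖ := norm_add_le _ _
            _ ≤ (‖a * b‖ + ‖a * c‖) + ‖b * c‖ := by gcongr; exact norm_add_le _ _
            _ ≤ t + t + t := by gcongr
    _ = 7 * t := by ring


/-- Jacobi's theta function
`θ(z, τ) = 2 q^{1/8} sin(πz) ∏_{n=1}^∞ (1−q^n)(1−q^n y)(1−q^n y⁻¹)`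
with `q = e^{2πiτ}`, `y = e^{2πiz}`. -/
noncomputable def jacobiTheta' (z τ : ℂ) : ℂ :=
  2 * Complex.exp (Real.pi * Complex.I * τ / 4) * Complex.sin (Real.pi * z) *
    ∏' n : ℕ,
      ((1 - Complex.exp (2 * Real.pi * Complex.I * τ) ^ (n + 1)) *
        (1 - Complex.exp (2 * Real.pi * Complex.I * τ) ^ (n + 1) *
            Complex.exp (2 * Real.pi * Complex.I * z)) *
        (1 - Complex.exp (2 * Real.pi * Complex.I * τ) ^ (n + 1) *
            (Complex.exp (2 * Real.pi * Complex.I * z))⁻¹))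


set_option maxHeartbeats 1000000 in
/-- `θ'(0, τ) = 2π q^{1/8} ∏_{n=1}^∞ (1−q^n)^3`, the derivative taken in the `z`
variable. -/
theorem jacobiTheta'_deriv_zero (τ : ℂ) (hτ : 0 < τ.im) :
    HasDerivAt (fun z => jacobiTheta' z τ)
      (2 * Real.pi * Complex.exp (Real.pi * Complex.I * τ / 4) *
        ∏' n : ℕ, (1 - Complex.exp (2 * Real.pi * Complex.I * τ) ^ (n + 1)) ^ 3)
      0 := by
  set q : ℂ := Complex.exp (2 * Real.pi * Complex.I * τ) with hq_def
  set r : ℝ := ‖q‖ with hr_def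
  have hr0 : 0 ≤ r := norm_nonneg q
  have hr1 : r < 1 := by
    rw [hr_def, hq_def, Complex.norm_exp]
    rw [Real.exp_lt_one_iff]
    have : (2 * (Real.pi:ℂ) * Complex.I * τ).re = -(2 * Real.pi * τ.im) := by
      simp [Complex.mul_re, Complex.mul_im]
    rw [this]
    have := Real.pi_pos
    nlinarith
  set F : ℕ → ℂ → ℂ := fun n z =>
    (1 - q ^ (n + 1)) * (1 - q ^ (n + 1) * Complex.exp (2 * Real.pi * Complex.I * z)) *
      (1 - q ^ (n + 1) * (Complex.exp (2 * Real.pi * Complex.I * z))⁻¹) with hF_def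
  set s : Set ℂ := Metric.closedBall (0 : ℂ) (1/10) with hs_def
  have hs_nhds : s ∈ nhds (0 : ℂ) := Metric.closedBall_mem_nhds 0 (by norm_num)
  have h0s : (0 : ℂ) ∈ s := Metric.mem_closedBall_self (by norm_num)
  -- bound on y and y⁻¹ on s
  have hy : ∀ z ∈ s, ‖Complex.exp (2 * Real.pi * Complex.I * z)‖ ≤ 2 ∧
      ‖(Complex.exp (2 * Real.pi * Complex.I * z))⁻¹‖ ≤ 2 := by
    intro z hz
    have hzim : |z.im| ≤ 1/10 := by
      have h1 : ‖z‖ ≤ 1/10 := by simpa [hs_def] using hz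
      exact le_trans (Complex.abs_im_le_norm z) h1
    have hre : (2 * (Real.pi:ℂ) * Complex.I * z).re = -(2 * Real.pi * z.im) := by
      simp [Complex.mul_re, Complex.mul_im]
    have hkey : ∀ x : ℝ, |x| ≤ 2 * Real.pi * |z.im| → Real.exp x ≤ 2 := by
      intro x hx
      have hπ : Real.pi < 3.15 := Real.pi_lt_d2
      have hlog : (0.6931471803 : ℝ) < Real.log 2 := Real.log_two_gt_d9
      have hx2 : x ≤ Real.log 2 := by
        have : 2 * Real.pi * |z.im| ≤ 2 * 3.15 * (1/10) := by
          have := Real.pi_pos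
          nlinarith [abs_nonneg z.im]
        nlinarith [le_abs_self x]
      calc Real.exp x ≤ Real.exp (Real.log 2) := Real.exp_le_exp.mpr hx2
        _ = 2 := Real.exp_log (by norm_num)
    constructor
    · rw [Complex.norm_exp, hre]
      apply hkey
      rw [abs_neg, abs_mul]
      have := Real.pi_pos
      rw [_root_.abs_of_nonneg (by positivity : (0:ℝ) ≤ 2 * Real.pi)]
    · rw [← Complex.exp_neg, Complex.norm_exp]
      apply hkey
      rw [Complex.neg_re, hre, neg_neg, abs_mul]
      have := Real.pi_pos
      rw [_root_.abs_of_nonneg (by positivity : (0:ℝ) ≤ 2 * Real.pi)]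
  -- choose N with r ^ N < 1/100
  obtain ⟨N, hN⟩ : ∃ N, r ^ N < 1/100 := exists_pow_lt_of_lt_one (by norm_num) hr1
  -- tail estimate
  have hF1 : ∀ z ∈ s, ∀ n : ℕ, ‖F (n + N) z - 1‖ ≤ 14 * (r ^ (N + 1) * r ^ n) := by
    intro z hz n
    obtain ⟨hy1, hy2⟩ := hy z hz
    have hqn : ‖q ^ (n + N + 1)‖ = r ^ (n + N + 1) := by rw [norm_pow]
    have t0 : (2:ℝ) * r ^ (n + N + 1) ≤ 1 := by
      have h2 : r ^ (n + N + 1) ≤ r ^ N := pow_le_pow_of_le_one hr0 hr1.le (by omega)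
      nlinarith [pow_nonneg hr0 (n + N + 1), pow_nonneg hr0 N]
    have ha : ‖q ^ (n + N + 1)‖ ≤ 2 * r ^ (n + N + 1) := by
      rw [hqn]; nlinarith [pow_nonneg hr0 (n + N + 1)]
    have hb : ‖q ^ (n + N + 1) * Complex.exp (2 * Real.pi * Complex.I * z)‖
        ≤ 2 * r ^ (n + N + 1) := by
      rw [norm_mul, hqn, mul_comm]
      exact mul_le_mul hy1 le_rfl (pow_nonneg hr0 _) (by norm_num)
    have hc : ‖q ^ (n + N + 1) * (Complex.exp (2 * Real.pi * Complex.I * z))⁻¹‖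
        ≤ 2 * r ^ (n + N + 1) := by
      rw [norm_mul, hqn, mul_comm]
      exact mul_le_mul hy2 le_rfl (pow_nonneg hr0 _) (by norm_num)
    have := triple_prod_est ha hb hc t0
    have heq : F (n + N) z = (1 - q ^ (n + N + 1)) *
        (1 - q ^ (n + N + 1) * Complex.exp (2 * Real.pi * Complex.I * z)) *
        (1 - q ^ (n + N + 1) * (Complex.exp (2 * Real.pi * Complex.I * z))⁻¹) := rfl
    rw [heq]
    calc ‖(1 - q ^ (n + N + 1)) *
        (1 - q ^ (n + N + 1) * Complex.exp (2 * Real.pi * Complex.I * z)) *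
        (1 - q ^ (n + N + 1) * (Complex.exp (2 * Real.pi * Complex.I * z))⁻¹) - 1‖
        ≤ 7 * (2 * r ^ (n + N + 1)) := this
      _ = 14 * (r ^ (N + 1) * r ^ n) := by rw [← pow_add]; ring_nf
  have hF_half : ∀ z ∈ s, ∀ n : ℕ, ‖F (n + N) z - 1‖ ≤ 1/2 := by
    intro z hz n
    refine (hF1 z hz n).trans ?_
    have h2 : r ^ (N + 1) * r ^ n ≤ r ^ N := by
      rw [← pow_add]
      exact pow_le_pow_of_le_one hr0 hr1.le (by omega)
    nlinarith
  have hne : ∀ z ∈ s, ∀ n : ℕ, F (n + N) z ≠ 0 := by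
    intro z hz n h0
    have := hF_half z hz n
    rw [h0] at this
    simp at this
    norm_num at this
  have hslit : ∀ z ∈ s, ∀ n : ℕ, F (n + N) z ∈ Complex.slitPlane := by
    intro z hz n
    rw [Complex.mem_slitPlane_iff]
    left
    have h1 := hF_half z hz n
    have h2 : |(F (n + N) z - 1).re| ≤ 1/2 :=
      le_trans (Complex.abs_re_le_norm _) h1
    have h3 : (F (n + N) z - 1).re = (F (n + N) z).re - 1 := by simp
    rw [h3] at h2
    have := abs_le.mp h2
    linarith [this.1]
  -- log bounds
  have hlog : ∀ z ∈ s, ∀ n : ℕ, ‖Complex.log (F (n + N) z)‖ ≤ 21 * (r ^ (N + 1) * r ^ n) := by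
    intro z hz n
    have h1 := hF_half z hz n
    have h2 : Complex.log (F (n + N) z) = Complex.log (1 + (F (n + N) z - 1)) := by
      rw [add_sub_cancel]
    rw [h2]
    calc ‖Complex.log (1 + (F (n + N) z - 1))‖ ≤ (3/2) * ‖F (n + N) z - 1‖ :=
          Complex.norm_log_one_add_half_le_self h1
      _ ≤ (3/2) * (14 * (r ^ (N + 1) * r ^ n)) := by
          have := hF1 z hz n; nlinarith
      _ = 21 * (r ^ (N + 1) * r ^ n) := by ring
  have hu_sum : Summable (fun n : ℕ => 21 * (r ^ (N + 1) * r ^ n)) := by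
    apply Summable.mul_left
    exact (summable_geometric_of_lt_one hr0 hr1).mul_left _
  have hsum : ∀ z ∈ s, Summable fun n : ℕ => Complex.log (F (n + N) z) := by
    intro z hz
    exact Summable.of_norm_bounded hu_sum (hlog z hz)
  set T : ℂ → ℂ := fun z => ∑' n : ℕ, Complex.log (F (n + N) z) with hT_def
  have hProd : ∀ z ∈ s, HasProd (fun n : ℕ => F (n + N) z) (Complex.exp (T z)) := by
    intro z hz
    have h1 : HasProd (Complex.exp ∘ fun n : ℕ => Complex.log (F (n + N) z))
        (Complex.exp (T z)) := (hsum z hz).hasSum.cexp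
    have h2 : (Complex.exp ∘ fun n : ℕ => Complex.log (F (n + N) z))
        = fun n : ℕ => F (n + N) z :=
      funext fun n => Complex.exp_log (hne z hz n)
    rwa [h2] at h1
  have hsplit : ∀ z ∈ s, (∏' n : ℕ, F n z)
      = (∏ i ∈ Finset.range N, F i z) * Complex.exp (T z) := by
    intro z hz
    have hm : Multipliable (fun n : ℕ => F (n + N) z) := (hProd z hz).multipliable
    rw [← (hProd z hz).tprod_eq]
    exact (Multipliable.prod_mul_tprod_nat_mul' hm).symm
  -- continuity of each factor
  have hFcont : ∀ n : ℕ, Continuous (F n) := by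
    intro n
    have he : Continuous fun z : ℂ => Complex.exp (2 * Real.pi * Complex.I * z) :=
      Complex.continuous_exp.comp (by continuity)
    have he' : Continuous fun z : ℂ => (Complex.exp (2 * Real.pi * Complex.I * z))⁻¹ :=
      he.inv₀ fun x => Complex.exp_ne_zero _
    exact ((continuous_const.sub continuous_const).mul
      (continuous_const.sub (continuous_const.mul he))).mul
      (continuous_const.sub (continuous_const.mul he'))
  have hTcont : ContinuousOn T s := by
    apply continuousOn_tsum (u := fun n : ℕ => 21 * (r ^ (N + 1) * r ^ n))
    · intro n
      exact ContinuousOn.clog (hFcont (n + N)).continuousOn fun z hz => hslit z hz n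
    · exact hu_sum
    · intro n z hz
      exact hlog z hz n
  -- continuity of the full product at 0
  have hPcont : ContinuousAt (fun z : ℂ => ∏' n : ℕ, F n z) 0 := by
    have h1 : ContinuousAt
        (fun z : ℂ => (∏ i ∈ Finset.range N, F i z) * Complex.exp (T z)) 0 := by
      apply ContinuousAt.mul
      · exact (continuous_finset_prod _ fun i _ => hFcont i).continuousAt
      · exact Complex.continuous_exp.continuousAt.comp
          ((hTcont 0 h0s).continuousAt hs_nhds)
    exact h1.congr (Filter.eventually_of_mem hs_nhds fun z hz => (hsplit z hz).symm)
  -- value at 0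
  have hP0 : (∏' n : ℕ, F n 0) = ∏' n : ℕ, (1 - q ^ (n + 1)) ^ 3 := by
    apply tprod_congr
    intro n
    simp only [hF_def, mul_zero, Complex.exp_zero]
    ring
  -- derivative of sin (π z) at 0
  have hsin : HasDerivAt (fun z : ℂ => Complex.sin ((Real.pi : ℂ) * z)) (Real.pi : ℂ) 0 := by
    have h1 := Complex.hasDerivAt_sin ((Real.pi : ℂ) * 0)
    have h2 := (hasDerivAt_id (0 : ℂ)).const_mul (Real.pi : ℂ)
    have h3 := h1.comp 0 h2
    simp at h3; exact h3
  set C : ℂ := 2 * Complex.exp (Real.pi * Complex.I * τ / 4) with hC_def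
  have hjt : ∀ z : ℂ, jacobiTheta' z τ = C * Complex.sin ((Real.pi : ℂ) * z) * ∏' n : ℕ, F n z :=
    fun z => rfl
  rw [hasDerivAt_iff_tendsto_slope]
  have hslope_eq : slope (fun z => jacobiTheta' z τ) 0 =ᶠ[nhdsWithin 0 {(0:ℂ)}ᶜ]
      fun z : ℂ => C * (Complex.sin ((Real.pi : ℂ) * z) / z) * ∏' n : ℕ, F n z := by
    filter_upwards [self_mem_nhdsWithin] with z hz
    have hz0 : z ≠ (0 : ℂ) := hz
    rw [slope_def_field, hjt z, hjt 0]
    rw [mul_zero, Complex.sin_zero, mul_zero, zero_mul, sub_zero, sub_zero]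
    field_simp
  have h2 : Tendsto (fun z : ℂ => Complex.sin ((Real.pi : ℂ) * z) / z)
      (nhdsWithin 0 {(0:ℂ)}ᶜ) (nhds (Real.pi : ℂ)) := by
    have h1 := hasDerivAt_iff_tendsto_slope.mp hsin
    apply h1.congr'
    filter_upwards [self_mem_nhdsWithin] with z hz
    rw [slope_def_field, mul_zero, Complex.sin_zero, sub_zero, sub_zero]
  have h3 : Tendsto (fun z : ℂ => ∏' n : ℕ, F n z) (nhdsWithin 0 {(0:ℂ)}ᶜ)
      (nhds (∏' n : ℕ, F n 0)) := hPcont.tendsto.mono_left nhdsWithin_le_nhds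
  have h4 : Tendsto (fun z : ℂ => C * (Complex.sin ((Real.pi : ℂ) * z) / z) * ∏' n : ℕ, F n z)
      (nhdsWithin 0 {(0:ℂ)}ᶜ) (nhds (C * (Real.pi : ℂ) * ∏' n : ℕ, F n 0)) :=
    (tendsto_const_nhds.mul h2).mul h3
  have hval : (2 * (Real.pi : ℂ) * Complex.exp (Real.pi * Complex.I * τ / 4) *
      ∏' n : ℕ, (1 - q ^ (n + 1)) ^ 3) = C * (Real.pi : ℂ) * ∏' n : ℕ, F n 0 := by
    rw [hP0, hC_def]; ring
  rw [hval]
  exact Filter.Tendsto.congr' hslope_eq.symm h4
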